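/- arXiv:2202.11219 — 3 statements merged into one kernel-verified Lean document; each statement's English description precedes it below -/
import Mathlib

section
/- Let −1 < a < 0, g ∈ ℝ^m, v ∈ Δ^m with all coordinates strictly positive, and κ ≥ 0. Let c be the unique real number with g_i + c > 0 for all i and ∑_{i=1}^m (g_i + c)^{1/a} = 1. If g_i ≥ v_i^a − κ/v_i and κ ≤ a² v_i^{a+1} for all i ∈ [m], then c ≤ m κ. -/
open Finset

private lemma qAlg {a A u κ M X : ℝ} (ha1 : -1 < a) (ha2 : a < 0) (hA : 0 < A)
    (hu : 0 < u) (hκ : 0 ≤ κ) (hM : 0 ≤ M) (hK : κ * u ≤ a ^ 2 * A)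
    (hX : X = A + κ * M - κ * u) :
    a * ((1 / a - 1) * (a * A * u + κ * u ^ 2) ^ 2
        + X * (a * (a - 1) * A * u ^ 2 - 2 * κ * u ^ 3)) ≤ 0 := by
  have ha0 : a ≠ 0 := ne_of_lt ha2
  have hid : a * ((1 / a - 1) * (a * A * u + κ * u ^ 2) ^ 2
        + X * (a * (a - 1) * A * u ^ 2 - 2 * κ * u ^ 3))
      = u ^ 2 * ((1 + a) * (κ * u) * (κ * u - a ^ 2 * A)
          + a * (κ * M) * (a * (a - 1) * A - 2 * (κ * u))) := by
    rw [hX]; field_simp; ring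
  rw [hid]
  have t1 : (1 + a) * (κ * u) * (κ * u - a ^ 2 * A) ≤ 0 := by
    apply mul_nonpos_of_nonneg_of_nonpos
    · exact mul_nonneg (by linarith) (mul_nonneg hκ hu.le)
    · linarith
  have t2 : (0:ℝ) ≤ a * (a - 1) * A - 2 * (κ * u) := by
    nlinarith [mul_nonneg (mul_nonneg (neg_nonneg.mpr ha2.le)
      (by linarith : (0:ℝ) ≤ 1 + a)) hA.le]
  have t3 : a * (κ * M) * (a * (a - 1) * A - 2 * (κ * u)) ≤ 0 := by
    apply mul_nonpos_of_nonpos_of_nonneg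
    · exact mul_nonpos_of_nonpos_of_nonneg ha2.le (by positivity)
    · exact t2
  nlinarith [sq_nonneg u]

private lemma concaveAux {a κ M t₀ : ℝ} (ha1 : -1 < a) (ha2 : a < 0)
    (hκ : 0 ≤ κ) (hM : 0 ≤ M) (ht₀ : 0 < t₀) (hκt : κ ≤ a ^ 2 * t₀ ^ (a + 1)) :
    ConcaveOn ℝ (Set.Ici t₀)
      (fun t : ℝ => (t ^ a + κ * M - κ * t ^ (-1 : ℝ)) ^ (1 / a)) := by
  have ha0 : a ≠ 0 := ne_of_lt ha2
  have haa : a ^ 2 < 1 := by nlinarith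
  have hκt' : ∀ t : ℝ, t₀ ≤ t → κ * t ^ (-1:ℝ) ≤ a ^ 2 * t ^ a := by
    intro t ht
    have htp : (0:ℝ) < t := lt_of_lt_of_le ht₀ ht
    have hu : (0:ℝ) < t ^ (-1:ℝ) := Real.rpow_pos_of_pos htp _
    have h0 : κ ≤ a ^ 2 * t ^ (a+1) := by
      refine hκt.trans ?_
      have : t₀ ^ (a+1) ≤ t ^ (a+1) := Real.rpow_le_rpow ht₀.le ht (by linarith)
      nlinarith [sq_nonneg a]
    have h2 : κ * t ^ (-1:ℝ) ≤ (a ^ 2 * t ^ (a+1)) * t ^ (-1:ℝ) :=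
      mul_le_mul_of_nonneg_right h0 hu.le
    have h3 : t ^ (a+1) * t ^ (-1:ℝ) = t ^ a := by
      rw [← Real.rpow_add htp]; congr 1 <;> (push_cast; ring)
    nlinarith
  have hXpos : ∀ t : ℝ, t₀ ≤ t → 0 < t ^ a + κ * M - κ * t ^ (-1:ℝ) := by
    intro t ht
    have htp : (0:ℝ) < t := lt_of_lt_of_le ht₀ ht
    have hA : (0:ℝ) < t ^ a := Real.rpow_pos_of_pos htp a
    have h1 := hκt' t ht
    nlinarith [mul_nonneg hκ hM]
  have hXd : ∀ t : ℝ, 0 < t → HasDerivAt (fun s : ℝ => s ^ a + κ * M - κ * s ^ (-1:ℝ))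
      (a * t ^ (a-1) + κ * t ^ (-2:ℝ)) t := by
    intro t htp
    have h1 : HasDerivAt (fun s : ℝ => s ^ a) (a * t ^ (a-1)) t :=
      Real.hasDerivAt_rpow_const (Or.inl htp.ne')
    have h2 : HasDerivAt (fun s : ℝ => s ^ (-1:ℝ)) ((-1) * t ^ ((-1:ℝ)-1)) t :=
      Real.hasDerivAt_rpow_const (Or.inl htp.ne')
    have h3 := (h1.add_const (κ * M)).sub (h2.const_mul κ)
    have he : ((-1:ℝ)-1) = (-2:ℝ) := by norm_num
    rw [he] at h3
    have he2 : a * t ^ (a-1) + κ * t ^ (-2:ℝ) = a * t ^ (a-1) - κ * (-1 * t ^ (-2:ℝ)) := by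
      ring
    rw [he2]
    exact h3
  have hFd : ∀ t : ℝ, t₀ ≤ t → HasDerivAt
      (fun t : ℝ => (t ^ a + κ * M - κ * t ^ (-1 : ℝ)) ^ (1 / a))
      ((a * t ^ (a-1) + κ * t ^ (-2:ℝ)) * (1/a)
        * (t ^ a + κ * M - κ * t ^ (-1:ℝ)) ^ (1/a - 1)) t := by
    intro t ht
    have htp : (0:ℝ) < t := lt_of_lt_of_le ht₀ ht
    exact (hXd t htp).rpow_const (Or.inl (hXpos t ht).ne')
  have hFd2 : ∀ t : ℝ, t₀ ≤ t → HasDerivAt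
      (fun t : ℝ => (a * t ^ (a-1) + κ * t ^ (-2:ℝ)) * (1/a)
        * (t ^ a + κ * M - κ * t ^ (-1:ℝ)) ^ (1/a - 1))
      ((a * ((a-1) * t ^ (a-2)) + κ * ((-2) * t ^ (-3:ℝ))) * (1/a)
          * (t ^ a + κ * M - κ * t ^ (-1:ℝ)) ^ (1/a - 1)
        + (a * t ^ (a-1) + κ * t ^ (-2:ℝ)) * (1/a)
          * ((a * t ^ (a-1) + κ * t ^ (-2:ℝ)) * (1/a - 1)
            * (t ^ a + κ * M - κ * t ^ (-1:ℝ)) ^ (1/a - 2))) t := by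
    intro t ht
    have htp : (0:ℝ) < t := lt_of_lt_of_le ht₀ ht
    have h1 : HasDerivAt (fun s : ℝ => s ^ (a-1)) ((a-1) * t ^ (a-1-1)) t :=
      Real.hasDerivAt_rpow_const (Or.inl htp.ne')
    have h2 : HasDerivAt (fun s : ℝ => s ^ (-2:ℝ)) ((-2) * t ^ ((-2:ℝ)-1)) t :=
      Real.hasDerivAt_rpow_const (Or.inl htp.ne')
    have he1 : (a-1-1) = (a-2) := by ring
    have he2 : ((-2:ℝ)-1) = (-3:ℝ) := by norm_num
    rw [he1] at h1; rw [he2] at h2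
    have hX'd : HasDerivAt (fun s : ℝ => a * s ^ (a-1) + κ * s ^ (-2:ℝ))
        (a * ((a-1) * t ^ (a-2)) + κ * ((-2) * t ^ (-3:ℝ))) t :=
      (h1.const_mul a).add (h2.const_mul κ)
    have hB : HasDerivAt
        (fun s : ℝ => (s ^ a + κ * M - κ * s ^ (-1:ℝ)) ^ (1/a - 1))
        ((a * t ^ (a-1) + κ * t ^ (-2:ℝ)) * (1/a - 1)
          * (t ^ a + κ * M - κ * t ^ (-1:ℝ)) ^ (1/a - 1 - 1)) t :=
      (hXd t htp).rpow_const (Or.inl (hXpos t ht).ne')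
    have he3 : (1/a - 1 - 1) = (1/a - 2) := by ring
    rw [he3] at hB
    exact (hX'd.mul_const (1/a)).mul hB
  apply concaveOn_of_hasDerivWithinAt2_nonpos (convex_Ici t₀)
    (f' := fun t : ℝ => (a * t ^ (a-1) + κ * t ^ (-2:ℝ)) * (1/a)
        * (t ^ a + κ * M - κ * t ^ (-1:ℝ)) ^ (1/a - 1))
    (f'' := fun t : ℝ => (a * ((a-1) * t ^ (a-2)) + κ * ((-2) * t ^ (-3:ℝ))) * (1/a)
          * (t ^ a + κ * M - κ * t ^ (-1:ℝ)) ^ (1/a - 1)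
        + (a * t ^ (a-1) + κ * t ^ (-2:ℝ)) * (1/a)
          * ((a * t ^ (a-1) + κ * t ^ (-2:ℝ)) * (1/a - 1)
            * (t ^ a + κ * M - κ * t ^ (-1:ℝ)) ^ (1/a - 2)))
  · intro t ht
    exact ((hFd t ht).continuousAt).continuousWithinAt
  · intro t ht
    rw [interior_Ici] at ht
    exact (hFd t ht.le).hasDerivWithinAt
  · intro t ht
    rw [interior_Ici] at ht
    exact (hFd2 t ht.le).hasDerivWithinAt
  · intro t ht
    rw [interior_Ici] at ht
    have htle := le_of_lt (Set.mem_Ioi.mp ht)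
    have htp : (0:ℝ) < t := lt_of_lt_of_le ht₀ htle
    have hA : (0:ℝ) < t ^ a := Real.rpow_pos_of_pos htp a
    have hu : (0:ℝ) < t ^ (-1:ℝ) := Real.rpow_pos_of_pos htp _
    have hP : (0:ℝ) < t ^ a + κ * M - κ * t ^ (-1:ℝ) := hXpos t htle
    have e1 : t ^ (a-1) = t ^ a * t ^ (-1:ℝ) := by
      rw [← Real.rpow_add htp]; congr 1 <;> (push_cast; ring)
    have e2 : t ^ (a-2) = t ^ a * (t ^ (-1:ℝ)) ^ 2 := by
      rw [← Real.rpow_natCast (t ^ (-1:ℝ)) 2, ← Real.rpow_mul htp.le,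
        ← Real.rpow_add htp]
      congr 1 <;> (push_cast; ring)
    have e3 : t ^ (-2:ℝ) = (t ^ (-1:ℝ)) ^ 2 := by
      rw [← Real.rpow_natCast (t ^ (-1:ℝ)) 2, ← Real.rpow_mul htp.le]
      congr 1 <;> (push_cast; ring)
    have e4 : t ^ (-3:ℝ) = (t ^ (-1:ℝ)) ^ 3 := by
      rw [← Real.rpow_natCast (t ^ (-1:ℝ)) 3, ← Real.rpow_mul htp.le]
      congr 1 <;> (push_cast; ring)
    have e5 : (t ^ a + κ * M - κ * t ^ (-1:ℝ)) ^ (1/a - 1)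
        = (t ^ a + κ * M - κ * t ^ (-1:ℝ)) ^ (1/a - 2)
          * (t ^ a + κ * M - κ * t ^ (-1:ℝ)) := by
      have hsplit : 1/a - 1 = (1/a - 2) + 1 := by ring
      rw [hsplit, Real.rpow_add hP, Real.rpow_one]
    have hK : κ * t ^ (-1:ℝ) ≤ a ^ 2 * t ^ a := hκt' t htle
    have hQ := qAlg (A := t ^ a) (u := t ^ (-1:ℝ)) (κ := κ) (M := M)
      (X := t ^ a + κ * M - κ * t ^ (-1:ℝ)) ha1 ha2 hA hu hκ hM hK rfl
    set A := t ^ a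
    set u := t ^ (-1:ℝ)
    set P := t ^ a + κ * M - κ * t ^ (-1:ℝ) with hPdef
    set Pe := P ^ (1/a - 2) with hPe
    have hPep : (0:ℝ) < Pe := Real.rpow_pos_of_pos hP _
    rw [e1, e2, e3, e4, e5]
    have key : (a * ((a-1) * (A * u ^ 2)) + κ * (-2 * u ^ 3)) * (1/a) * (Pe * P)
        + (a * (A * u) + κ * u ^ 2) * (1/a)
          * ((a * (A * u) + κ * u ^ 2) * (1/a - 1) * Pe)
      = Pe * ((a * ((1 / a - 1) * (a * A * u + κ * u ^ 2) ^ 2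
        + P * (a * (a - 1) * A * u ^ 2 - 2 * κ * u ^ 3))) * (a ^ 2)⁻¹) := by
      field_simp
      ring
    rw [key]
    have ha2inv : (0:ℝ) < (a ^ 2)⁻¹ := by positivity
    exact mul_nonpos_of_nonneg_of_nonpos hPep.le
      (mul_nonpos_of_nonpos_of_nonneg hQ ha2inv.le)

/-- Lemma (refined upper bound on the normalizing constant): let `-1 < a < 0`,
`v ∈ Δ^m` with strictly positive coordinates, `κ ≥ 0`, and let `c` be the unique
real with `g_i + c > 0` for all `i` and `∑_i (g_i + c)^{1/a} = 1`.  If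
`g_i ≥ v_i^a - κ/v_i` and `κ ≤ a² v_i^{a+1}` for all `i`, then `c ≤ m κ`. -/
theorem stmt16 {m : ℕ} (hm : 0 < m) (a : ℝ) (ha : a ∈ Set.Ioo (-1 : ℝ) 0)
    (g v : Fin m → ℝ) (hv : v ∈ stdSimplex ℝ (Fin m)) (hvpos : ∀ i, 0 < v i)
    (κ : ℝ) (hκ : 0 ≤ κ)
    (c : ℝ) (hcpos : ∀ i, 0 < g i + c) (hsum : ∑ i, (g i + c) ^ (1 / a) = 1)
    (hg : ∀ i, (v i) ^ a - κ / v i ≤ g i)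
    (hκ' : ∀ i, κ ≤ a ^ 2 * (v i) ^ (a + 1)) :
    c ≤ m * κ := by
  obtain ⟨ha1, ha2⟩ := ha
  have ha0 : a ≠ 0 := ne_of_lt ha2
  have hia : 1 / a < 0 := div_neg_of_pos_of_neg one_pos ha2
  obtain ⟨i₀, -, hmin⟩ := Finset.exists_min_image Finset.univ v
    ⟨⟨0, hm⟩, Finset.mem_univ _⟩
  have ht₀ : 0 < v i₀ := hvpos i₀
  have hmR : (0:ℝ) < (m:ℝ) := Nat.cast_pos.mpr hm
  have hconc := concaveAux (M := (m:ℝ)) (t₀ := v i₀) ha1 ha2 hκ hmR.le ht₀ (hκ' i₀)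
  -- positivity of the comparison function on the domain
  have hXpos : ∀ i : Fin m, 0 < (v i) ^ a + κ * m - κ * (v i) ^ (-1:ℝ) := by
    intro i
    have htp := hvpos i
    have hA : (0:ℝ) < (v i) ^ a := Real.rpow_pos_of_pos htp a
    have hu : (0:ℝ) < (v i) ^ (-1:ℝ) := Real.rpow_pos_of_pos htp _
    have h0 := hκ' i
    have h3 : (v i) ^ (a+1) * (v i) ^ (-1:ℝ) = (v i) ^ a := by
      rw [← Real.rpow_add htp]; congr 1 <;> (push_cast; ring)
    have h2 : κ * (v i) ^ (-1:ℝ) ≤ (a ^ 2 * (v i) ^ (a+1)) * (v i) ^ (-1:ℝ) :=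
      mul_le_mul_of_nonneg_right h0 hu.le
    have haa : a ^ 2 < 1 := by nlinarith
    nlinarith [mul_nonneg hκ hmR.le]
  -- Jensen
  have hJ := hconc.le_map_sum (t := Finset.univ) (w := fun _ : Fin m => (m:ℝ)⁻¹)
    (p := v) (fun i _ => by positivity)
    (by rw [Finset.sum_const, Finset.card_univ, Fintype.card_fin, nsmul_eq_mul]
        field_simp)
    (fun i _ => hmin i (Finset.mem_univ i))
  have hmean : ∑ i : Fin m, (m:ℝ)⁻¹ • v i = (m:ℝ)⁻¹ := by
    rw [← Finset.smul_sum, hv.2]; simp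
  rw [hmean] at hJ
  have hFmean : (((m:ℝ)⁻¹) ^ a + κ * m - κ * ((m:ℝ)⁻¹) ^ (-1:ℝ)) ^ (1/a) = (m:ℝ)⁻¹ := by
    have h1 : ((m:ℝ)⁻¹) ^ (-1:ℝ) = (m:ℝ) := by rw [Real.rpow_neg_one]; simp
    rw [h1]
    have h2 : ((m:ℝ)⁻¹) ^ a + κ * m - κ * m = ((m:ℝ)⁻¹) ^ a := by ring
    rw [h2, ← Real.rpow_mul (by positivity : (0:ℝ) ≤ (m:ℝ)⁻¹),
      mul_one_div, div_self ha0, Real.rpow_one]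
  rw [hFmean] at hJ
  have hsumF : ∑ i, ((v i) ^ a + κ * m - κ * (v i) ^ (-1:ℝ)) ^ (1/a) ≤ 1 := by
    have h4 : (m:ℝ)⁻¹ * ∑ i, ((v i) ^ a + κ * m - κ * (v i) ^ (-1:ℝ)) ^ (1/a)
        ≤ (m:ℝ)⁻¹ * 1 := by
      rw [Finset.mul_sum, mul_one]
      simpa [smul_eq_mul] using hJ
    exact le_of_mul_le_mul_left h4 (by positivity)
  have hXle : ∀ i, (v i) ^ a + κ * m - κ * (v i) ^ (-1:ℝ) ≤ g i + m * κ := by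
    intro i
    have h1 : (v i) ^ (-1:ℝ) = (v i)⁻¹ := Real.rpow_neg_one _
    have h2 := hg i
    rw [div_eq_mul_inv] at h2
    rw [h1]
    linarith
  have hterm : ∀ i, (g i + m * κ) ^ (1/a)
      ≤ ((v i) ^ a + κ * m - κ * (v i) ^ (-1:ℝ)) ^ (1/a) := fun i =>
    Real.rpow_le_rpow_of_nonpos (hXpos i) (hXle i) hia.le
  have hgpos : ∀ i, 0 < g i + m * κ := fun i => lt_of_lt_of_le (hXpos i) (hXle i)
  by_contra hcon
  push_neg at hcon
  have hlt : ∀ i, (g i + c) ^ (1/a) < (g i + m * κ) ^ (1/a) := fun i =>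
    Real.rpow_lt_rpow_of_neg (hgpos i) (by linarith) hia
  have hbad : (1:ℝ) < 1 := by
    calc (1:ℝ) = ∑ i, (g i + c) ^ (1/a) := hsum.symm
    _ < ∑ i, (g i + m * κ) ^ (1/a) :=
        Finset.sum_lt_sum_of_nonempty (Finset.univ_nonempty_iff.mpr ⟨⟨0, hm⟩⟩)
          (fun i _ => hlt i)
    _ ≤ ∑ i, ((v i) ^ a + κ * m - κ * (v i) ^ (-1:ℝ)) ^ (1/a) :=
        Finset.sum_le_sum (fun i _ => hterm i)
    _ ≤ 1 := hsumF
  exact lt_irrefl 1 hbad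
end

section
/- Let −1 < a < 0 and κ, c ≥ 0, and define f(x) = (x^a − κ/x + c)^{1/a}. Then for every x > 0 with a² x^{a+1} ≥ κ, the quantity x^a − κ/x + c is strictly positive (so f is defined), and f is concave on the set {x > 0 : a² x^{a+1} ≥ κ}, which is an interval of the form [(κ/a²)^{1/(a+1)}, ∞) intersected with (0, ∞). -/
open Finset

lemma key_ineq (a κ d u : ℝ) (ha1 : -1 < a) (ha2 : a < 0) (hκ : 0 ≤ κ)
    (hd : 0 ≤ d) (hu : 0 < u) (hcon : κ ≤ a ^ 2 * u) :
    (1 - a) * (a * u + κ) ^ 2 + a * (u - κ + d) * (a * (a - 1) * u - 2 * κ) ≤ 0 := by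
  have hfac : 0 ≤ a * (a - 1) * u - 2 * κ := by
    nlinarith [mul_nonneg (mul_nonneg (by linarith : (0:ℝ) ≤ -a) (by linarith : (0:ℝ) ≤ 1 + a)) hu.le]
  nlinarith [mul_nonneg (mul_nonneg (by linarith : (0:ℝ) ≤ 1 + a) hκ)
      (by linarith : (0:ℝ) ≤ a ^ 2 * u - κ),
    mul_nonneg (mul_nonneg (by linarith : (0:ℝ) ≤ -a) hd) hfac]

/-- Claim: for `-1 < a < 0` and `κ, c ≥ 0`, the function
`f(x) = (x^a - κ/x + c)^{1/a}` is defined (its base is strictly positive) at every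
`x > 0` with `a² x^{a+1} ≥ κ`, and `f` is concave on the set
`{x > 0 : a² x^{a+1} ≥ κ}`, which equals `[(κ/a²)^{1/(a+1)}, ∞) ∩ (0, ∞)`. -/
theorem stmt17 (a κ c : ℝ) (ha : a ∈ Set.Ioo (-1 : ℝ) 0) (hκ : 0 ≤ κ) (hc : 0 ≤ c) :
    (∀ x : ℝ, 0 < x → κ ≤ a ^ 2 * x ^ (a + 1) → 0 < x ^ a - κ / x + c) ∧
    ConcaveOn ℝ {x : ℝ | 0 < x ∧ κ ≤ a ^ 2 * x ^ (a + 1)}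
      (fun x => (x ^ a - κ / x + c) ^ (1 / a)) ∧
    {x : ℝ | 0 < x ∧ κ ≤ a ^ 2 * x ^ (a + 1)} =
      Set.Ici ((κ / a ^ 2) ^ (1 / (a + 1))) ∩ Set.Ioi (0 : ℝ) := by
  obtain ⟨ha1, ha2⟩ := ha
  have ha0 : a ≠ 0 := ne_of_lt ha2
  have hasq : (0:ℝ) < a ^ 2 := by positivity
  have hap1 : (0:ℝ) < a + 1 := by linarith
  -- Part 1
  have part1 : ∀ x : ℝ, 0 < x → κ ≤ a ^ 2 * x ^ (a + 1) → 0 < x ^ a - κ / x + c := by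
    intro x hx hcon
    have hxa : 0 < x ^ a := Real.rpow_pos_of_pos hx a
    have h1 : x ^ (a + 1) = x ^ a * x := Real.rpow_add_one hx.ne' a
    have h2 : κ / x ≤ a ^ 2 * x ^ a := by
      rw [div_le_iff₀ hx]
      calc κ ≤ a ^ 2 * x ^ (a + 1) := hcon
        _ = a ^ 2 * x ^ a * x := by rw [h1]; ring
    nlinarith [mul_pos (show (0:ℝ) < 1 - a ^ 2 by nlinarith) hxa]
  -- Part 3
  set t := (κ / a ^ 2) ^ (1 / (a + 1)) with ht
  have part3 : {x : ℝ | 0 < x ∧ κ ≤ a ^ 2 * x ^ (a + 1)} = Set.Ici t ∩ Set.Ioi 0 := by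
    ext x
    simp only [Set.mem_setOf_eq, Set.mem_inter_iff, Set.mem_Ici, Set.mem_Ioi]
    constructor
    · rintro ⟨hx, hcon⟩
      refine ⟨?_, hx⟩
      have h1 : κ / a ^ 2 ≤ x ^ (a + 1) := by
        rw [div_le_iff₀ hasq]; nlinarith
      calc t ≤ (x ^ (a + 1)) ^ (1 / (a + 1)) :=
            Real.rpow_le_rpow (by positivity) h1 (by positivity)
        _ = x := by
            rw [← Real.rpow_mul hx.le, mul_one_div_cancel hap1.ne', Real.rpow_one]
    · rintro ⟨hle, hx⟩
      refine ⟨hx, ?_⟩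
      have htnn : 0 ≤ t := Real.rpow_nonneg (by positivity) _
      have h1 : t ^ (a + 1) ≤ x ^ (a + 1) := Real.rpow_le_rpow htnn hle hap1.le
      have h2 : t ^ (a + 1) = κ / a ^ 2 := by
        rw [ht, ← Real.rpow_mul (by positivity), one_div_mul_cancel hap1.ne', Real.rpow_one]
      rw [h2, div_le_iff₀ hasq] at h1
      nlinarith
  refine ⟨part1, ?_, part3⟩
  -- Part 2: concavity
  set S := {x : ℝ | 0 < x ∧ κ ≤ a ^ 2 * x ^ (a + 1)} with hS
  have hconv : Convex ℝ S := by rw [part3]; exact (convex_Ici t).inter (convex_Ioi 0)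
  set p := 1 / a with hp
  have hpneg : p < 0 := by rw [hp]; exact one_div_neg.2 ha2
  set g : ℝ → ℝ := fun x => x ^ a - κ / x + c with hg
  set g1 : ℝ → ℝ := fun x => a * x ^ (a - 1) - κ * (-1 * x ^ (-1 - 1 : ℝ)) with hg1
  set g2 : ℝ → ℝ := fun x =>
    (a - 1) * x ^ (a - 1 - 1) * a - (-1 - 1) * x ^ (-1 - 1 - 1 : ℝ) * (κ * -1) with hg2
  have hgd : ∀ x : ℝ, 0 < x → HasDerivAt g (g1 x) x := by
    intro x hx
    have hxa : HasDerivAt (fun x : ℝ => x ^ a) (a * x ^ (a - 1)) x :=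
      Real.hasDerivAt_rpow_const (Or.inl hx.ne')
    have hxinv : HasDerivAt (fun x : ℝ => κ * x ^ (-1 : ℝ)) (κ * (-1 * x ^ (-1 - 1 : ℝ))) x := by
      have := (Real.hasDerivAt_rpow_const (p := (-1:ℝ)) (Or.inl hx.ne')).const_mul κ
      convert this using 1
    have hdiv : HasDerivAt (fun x : ℝ => κ / x) (κ * (-1 * x ^ (-1 - 1 : ℝ))) x := by
      refine hxinv.congr_of_eventuallyEq ?_
      filter_upwards [eventually_gt_nhds hx] with y hy
      rw [Real.rpow_neg_one, div_eq_mul_inv]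
    exact (hxa.sub hdiv).add_const c
  have hg1d : ∀ x : ℝ, 0 < x → HasDerivAt g1 (g2 x) x := by
    intro x hx
    have h1 : HasDerivAt (fun x : ℝ => x ^ (a - 1)) ((a - 1) * x ^ (a - 1 - 1)) x :=
      Real.hasDerivAt_rpow_const (Or.inl hx.ne')
    have h2 : HasDerivAt (fun x : ℝ => x ^ (-1 - 1 : ℝ)) ((-1 - 1) * x ^ (-1 - 1 - 1 : ℝ)) x :=
      Real.hasDerivAt_rpow_const (Or.inl hx.ne')
    have h3 := (h1.const_mul a).sub ((h2.const_mul (-1 : ℝ)).const_mul κ)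
    exact h3.congr_deriv (by simp only [hg2]; ring)
  -- positivity of base on S
  have hbase : ∀ x ∈ S, 0 < g x := fun x hx => part1 x hx.1 hx.2
  have hIntS : interior S ⊆ S := interior_subset
  -- continuity
  have hcont : ContinuousOn (fun x => g x ^ p) S := by
    intro x hxS
    have hx : 0 < x := hxS.1
    have hcg : ContinuousAt g x := by
      have h1 : ContinuousAt (fun x : ℝ => x ^ a) x :=
        Real.continuousAt_rpow_const x a (Or.inl hx.ne')
      have h2 : ContinuousAt (fun x : ℝ => κ / x) x :=
        continuousAt_const.div continuousAt_id hx.ne'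
      exact (h1.sub h2).add continuousAt_const
    exact (hcg.rpow_const (Or.inl (hbase x hxS).ne')).continuousWithinAt
  -- first derivative on interior
  set F1 : ℝ → ℝ := fun x => g1 x * p * g x ^ (p - 1) with hF1
  set F2 : ℝ → ℝ := fun x =>
    g2 x * p * g x ^ (p - 1) + g1 x * p * (g1 x * (p - 1) * g x ^ (p - 1 - 1)) with hF2
  have hfd : ∀ x ∈ interior S, HasDerivAt (fun x => g x ^ p) (F1 x) x := by
    intro x hxI
    exact (hgd x (hIntS hxI).1).rpow_const (Or.inl (hbase x (hIntS hxI)).ne')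
  have hfd2 : ∀ x ∈ interior S, HasDerivAt F1 (F2 x) x := by
    intro x hxI
    have hx := (hIntS hxI).1
    have hGpos := hbase x (hIntS hxI)
    have h1 : HasDerivAt (fun x => g1 x * p) (g2 x * p) x := (hg1d x hx).mul_const p
    have h2 : HasDerivAt (fun x => g x ^ (p - 1)) (g1 x * (p - 1) * g x ^ (p - 1 - 1)) x :=
      (hgd x hx).rpow_const (Or.inl hGpos.ne')
    exact h1.mul h2
  -- second derivative nonpositive
  have hF2nonpos : ∀ x ∈ interior S, F2 x ≤ 0 := by
    intro x hxI
    obtain ⟨hx, hcon⟩ := hIntS hxI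
    have hGpos : 0 < g x := part1 x hx hcon
    set y := x ^ a with hy
    have hypos : 0 < y := Real.rpow_pos_of_pos hx a
    -- rewrite all rpow powers of x
    have e1 : x ^ (a - 1) = y / x := by
      rw [Real.rpow_sub hx, Real.rpow_one]
    have e2 : x ^ (a - 1 - 1) = y / x / x := by
      rw [Real.rpow_sub hx, Real.rpow_sub hx, Real.rpow_one]
    have e3 : x ^ (-1 - 1 : ℝ) = 1 / x / x := by
      rw [show (-1 - 1 : ℝ) = 0 - 1 - 1 by norm_num, Real.rpow_sub hx, Real.rpow_sub hx,
        Real.rpow_zero, Real.rpow_one]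
    have e4 : x ^ (-1 - 1 - 1 : ℝ) = 1 / x / x / x := by
      rw [show (-1 - 1 - 1 : ℝ) = 0 - 1 - 1 - 1 by norm_num, Real.rpow_sub hx,
        Real.rpow_sub hx, Real.rpow_sub hx, Real.rpow_zero, Real.rpow_one]
    have hxp1 : x ^ (a + 1) = y * x := Real.rpow_add_one hx.ne' a
    -- the bracket inequality
    have hkey := key_ineq a κ (c * x) (y * x) ha1 ha2 hκ (mul_nonneg hc hx.le)
      (mul_pos hypos hx) (by rw [hxp1] at hcon; exact hcon)
    have hB : 0 ≤ g2 x * g x + (p - 1) * g1 x ^ 2 := by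
      have haB : a * (g2 x * g x + (p - 1) * g1 x ^ 2) ≤ 0 := by
        have hElim : a * (g2 x * g x + (p - 1) * g1 x ^ 2) =
            a * (g2 x * g x) + (1 - a) * g1 x ^ 2 := by
          rw [hp]; field_simp
        have hx4 : (0:ℝ) < x ^ 4 := by positivity
        refine le_of_mul_le_mul_right ?_ hx4
        rw [zero_mul, hElim]
        have expand : (a * (g2 x * g x) + (1 - a) * g1 x ^ 2) * x ^ 4 =
            (1 - a) * (a * (y * x) + κ) ^ 2 +
              a * (y * x - κ + c * x) * (a * (a - 1) * (y * x) - 2 * κ) := by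
          rw [hg2, hg1, hg]
          simp only [e1, e2, e3, e4, ← hy]
          field_simp
          ring
        rw [expand]
        exact hkey
      by_contra hBneg
      push_neg at hBneg
      nlinarith [mul_pos_of_neg_of_neg ha2 hBneg]
    -- F2 = p * g^(p-2) * bracket
    have hsplit : g x ^ (p - 1) = g x ^ (p - 1 - 1) * g x := by
      rw [← Real.rpow_add_one hGpos.ne' (p - 1 - 1)]
      congr 1
      ring
    have hGp2 : 0 < g x ^ (p - 1 - 1) := Real.rpow_pos_of_pos hGpos _
    have : F2 x = p * g x ^ (p - 1 - 1) * (g2 x * g x + (p - 1) * g1 x ^ 2) := by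
      simp only [hF2]
      rw [hsplit]; ring
    rw [this]
    exact mul_nonpos_of_nonpos_of_nonneg (mul_nonpos_of_nonpos_of_nonneg hpneg.le hGp2.le) hB
  exact concaveOn_of_hasDerivWithinAt2_nonpos hconv hcont
    (fun x hx => (hfd x hx).hasDerivWithinAt) (fun x hx => (hfd2 x hx).hasDerivWithinAt) hF2nonpos
end

section
/- Fix x > 0 and −1 < a < 0, and define f(y) = (x^a + y)^{1/a} for y > −x^a. Then for every c with −1 < c ≤ 0 and every y with c x^a ≤ y ≤ 0, f(y) − x ≤ (1/a) (1 + c)^{1/a − 1} x^{1−a} y. -/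
/-- Claim (second part): for `x > 0`, `-1 < a < 0` and `f(y) = (x^a + y)^{1/a}`,
for every `-1 < c ≤ 0` and every `y` with `c x^a ≤ y ≤ 0`, we have
`f(y) - x ≤ (1/a) (1 + c)^{1/a - 1} x^{1-a} y`. -/
theorem stmt19 (x a : ℝ) (hx : 0 < x) (ha : a ∈ Set.Ioo (-1 : ℝ) 0) :
    ∀ c : ℝ, -1 < c → c ≤ 0 →
      ∀ y : ℝ, c * x ^ a ≤ y → y ≤ 0 →
        (x ^ a + y) ^ (1 / a) - x ≤ (1 / a) * (1 + c) ^ (1 / a - 1) * x ^ (1 - a) * y := by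
  obtain ⟨ha1, ha0⟩ := ha
  intro c hc1 hc0 y hcy hy0
  have hane : a ≠ 0 := ne_of_lt ha0
  have hia : 1 / a < 0 := by
    apply div_neg_of_pos_of_neg one_pos ha0
  have hxa : (0 : ℝ) < x ^ a := Real.rpow_pos_of_pos hx a
  have hc1' : (0 : ℝ) < 1 + c := by linarith
  have hcx : (0 : ℝ) < (1 + c) * x ^ a := mul_pos hc1' hxa
  -- key: (1+c)^(1/a-1) * x^(1-a) = ((1+c)*x^a)^(1/a-1)
  have hM : (1 + c) ^ (1 / a - 1) * x ^ (1 - a) = ((1 + c) * x ^ a) ^ (1 / a - 1) := by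
    rw [Real.mul_rpow hc1'.le hxa.le, ← Real.rpow_mul hx.le]
    congr 2
    field_simp
  rcases eq_or_lt_of_le hy0 with rfl | hy
  · have : (x ^ a + 0) ^ (1 / a) = x := by
      rw [add_zero, ← Real.rpow_mul hx.le, mul_one_div, div_self hane, Real.rpow_one]
    rw [this]
    simp
  · -- y < 0 : use MVT on [y, 0]
    have hpos : ∀ t ∈ Set.Icc y 0, (0 : ℝ) < x ^ a + t := by
      intro t ht
      nlinarith [ht.1, hxa]
    have hderiv : ∀ t, 0 < x ^ a + t →
        HasDerivAt (fun s => (x ^ a + s) ^ (1 / a)) (1 / a * (x ^ a + t) ^ (1 / a - 1)) t := by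
      intro t ht
      have h1 : HasDerivAt (fun s : ℝ => x ^ a + s) 1 t := (hasDerivAt_id t).const_add _
      have := (Real.hasDerivAt_rpow_const (x := x ^ a + t) (p := 1 / a)
        (Or.inl ht.ne')).comp t h1
      simpa [Function.comp_def] using this
    have hcont : ContinuousOn (fun s => (x ^ a + s) ^ (1 / a)) (Set.Icc y 0) := by
      intro t ht
      exact ((hderiv t (hpos t ht)).continuousAt).continuousWithinAt
    obtain ⟨ξ, hξ, hslope⟩ := exists_hasDerivAt_eq_slope (fun s => (x ^ a + s) ^ (1 / a))
      (fun t => 1 / a * (x ^ a + t) ^ (1 / a - 1)) hy hcont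
      (fun t ht => hderiv t (hpos t (Set.mem_Icc_of_Ioo ht)))
    have hf0 : (x ^ a + 0) ^ (1 / a) = x := by
      rw [add_zero, ← Real.rpow_mul hx.le, mul_one_div, div_self hane, Real.rpow_one]
    have hyne : (0 : ℝ) - y ≠ 0 := by linarith [hy]
    have hprod : 1 / a * (x ^ a + ξ) ^ (1 / a - 1) * (0 - y) = x - (x ^ a + y) ^ (1 / a) := by
      rw [hslope, hf0, div_mul_cancel₀ _ hyne]
    have hfy : (x ^ a + y) ^ (1 / a) - x = 1 / a * (x ^ a + ξ) ^ (1 / a - 1) * y := by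
      linear_combination hprod
    have hMy : 1 / a * (1 + c) ^ (1 / a - 1) * x ^ (1 - a) * y
        = 1 / a * ((1 + c) * x ^ a) ^ (1 / a - 1) * y := by
      rw [mul_assoc (1 / a), hM]
    rw [hfy, hMy]
    -- need (1/a) * (x^a+ξ)^(1/a-1) * y ≤ (1/a) * ((1+c)*x^a)^(1/a-1) * y
    have hξpos : (1 + c) * x ^ a ≤ x ^ a + ξ := by nlinarith [hξ.1]
    have hpow : (x ^ a + ξ) ^ (1 / a - 1) ≤ ((1 + c) * x ^ a) ^ (1 / a - 1) :=
      Real.rpow_le_rpow_of_nonpos hcx hξpos (by linarith)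
    have hpowpos : (0 : ℝ) < (x ^ a + ξ) ^ (1 / a - 1) :=
      Real.rpow_pos_of_pos (lt_of_lt_of_le hcx hξpos) _
    have hy' : 0 < 1 / a * y := mul_pos_of_neg_of_neg hia hy
    nlinarith [mul_le_mul_of_nonneg_left hpow hy'.le]
end
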